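/- Let S be the Steiner loop on GF(3)² ∪ {e} (with x*y = -(x+y) for distinct x,y ∈ GF(3)², x*x = e, e the identity). If x, y, z ∈ S satisfy (x*y)*z = x*(y*z), then the subloop generated by {x, y, z} is associative, i.e., is a group; in fact it is contained in a subloop of the form {e, a, b, a*b} or {e, a} and hence is an elementary abelian 2-group. -/
import Mathlib


/-- The Steiner loop on `GF(3)² ∪ {e}`: `e = none` is the identity, `x*x = e`,
and `x*y = -(x+y)` for distinct `x, y ∈ GF(3)²`. -/
def ag23Mul : Option (ZMod 3 × ZMod 3) → Option (ZMod 3 × ZMod 3) → Option (ZMod 3 × ZMod 3)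
  | none, b => b
  | a, none => a
  | some u, some v => if u = v then none else some (-(u + v))

/-- The subloop of `GF(3)² ∪ {e}` generated by three elements: the smallest
subset containing them that is closed under multiplication. -/
def ag23Gen (x y z : Option (ZMod 3 × ZMod 3)) : Set (Option (ZMod 3 × ZMod 3)) :=
  ⋂₀ {T | x ∈ T ∧ y ∈ T ∧ z ∈ T ∧ ∀ a ∈ T, ∀ b ∈ T, ag23Mul a b ∈ T}

/-- Membership in the 4-element subloop `{e, a, b, a*b}`. -/
def ag23InT (a b p : Option (ZMod 3 × ZMod 3)) : Prop :=
  p = none ∨ p = a ∨ p = b ∨ p = ag23Mul a b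

instance (a b p : Option (ZMod 3 × ZMod 3)) : Decidable (ag23InT a b p) := by
  unfold ag23InT; infer_instance

lemma ag23_closed : ∀ a b p q : Option (ZMod 3 × ZMod 3),
    ag23InT a b p → ag23InT a b q → ag23InT a b (ag23Mul p q) := by decide

set_option maxHeartbeats 4000000 in
lemma ag23_assoc : ∀ a b p q r : Option (ZMod 3 × ZMod 3),
    ag23InT a b p → ag23InT a b q → ag23InT a b r →
    ag23Mul (ag23Mul p q) r = ag23Mul p (ag23Mul q r) := by decide

lemma ag23_exists : ∀ x y z : Option (ZMod 3 × ZMod 3),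
    ag23Mul (ag23Mul x y) z = ag23Mul x (ag23Mul y z) →
    ∃ a b, ag23InT a b x ∧ ag23InT a b y ∧ ag23InT a b z := by decide

lemma ag23_sq : ∀ a : Option (ZMod 3 × ZMod 3), ag23Mul a a = none := by
  rintro (_ | u) <;> simp [ag23Mul]

/-- Moufang's theorem for the Steiner loop of `AG(2,3)`: if `(x*y)*z = x*(y*z)`
then the subloop generated by `x, y, z` is associative (a group); in fact it is
contained in a set of the form `{e, a, b, a*b}` and hence is elementary
abelian of exponent 2. -/
theorem stmt_17 (x y z : Option (ZMod 3 × ZMod 3))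
    (h : ag23Mul (ag23Mul x y) z = ag23Mul x (ag23Mul y z)) :
    (∀ a ∈ ag23Gen x y z, ∀ b ∈ ag23Gen x y z, ∀ c ∈ ag23Gen x y z,
        ag23Mul (ag23Mul a b) c = ag23Mul a (ag23Mul b c)) ∧
    (∃ a b : Option (ZMod 3 × ZMod 3),
        ag23Gen x y z ⊆ {none, a, b, ag23Mul a b}) ∧
    (∀ a ∈ ag23Gen x y z, ag23Mul a a = none) := by
  obtain ⟨a, b, hx, hy, hz⟩ := ag23_exists x y z h
  have hTmem : ∀ p, p ∈ ({none, a, b, ag23Mul a b} : Set (Option (ZMod 3 × ZMod 3))) ↔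
      ag23InT a b p := by
    intro p
    simp [ag23InT, Set.mem_insert_iff]
  have hsub : ag23Gen x y z ⊆ {none, a, b, ag23Mul a b} := by
    apply Set.sInter_subset_of_mem
    refine ⟨(hTmem x).2 hx, (hTmem y).2 hy, (hTmem z).2 hz, ?_⟩
    intro p hp q hq
    exact (hTmem _).2 (ag23_closed a b p q ((hTmem p).1 hp) ((hTmem q).1 hq))
  refine ⟨?_, ⟨a, b, hsub⟩, fun a _ => ag23_sq a⟩
  intro p hp q hq r hr
  exact ag23_assoc a b p q r ((hTmem p).1 (hsub hp)) ((hTmem q).1 (hsub hq))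
    ((hTmem r).1 (hsub hr))
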